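/- In the triangular grid with a periodic configuration c (periodic of even period n in both coordinate directions): if the cell u is stable for c under rule 2 but not stable under rule 23, then the connected component G[0,u] of inactive cells containing u is a tree, i.e. it is connected and contains no cycle. -/

import Mathlib

/-- Neighbors in the triangular grid: cell `(i,j)` is adjacent to `(i-1,j)`,
`(i+1,j)`, and `(i,j-1)` if `i+j` is even, `(i,j+1)` if `i+j` is odd. -/
def triNbrs (p : ℤ × ℤ) : Finset (ℤ × ℤ) :=
  {(p.1 - 1, p.2), (p.1 + 1, p.2),
   (p.1, if Even (p.1 + p.2) then p.2 - 1 else p.2 + 1)}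

/-- Number of active neighbors of `p` in configuration `c`. -/
def triActCount (c : ℤ × ℤ → Bool) (p : ℤ × ℤ) : ℕ :=
  ((triNbrs p).filter (fun q => c q = true)).card

/-- The freezing totalistic rule on the triangular grid with activating set `I`. -/
def ruleT (I : Finset ℕ) (c : ℤ × ℤ → Bool) : ℤ × ℤ → Bool :=
  fun p => c p || decide (triActCount c p ∈ I)

/-- A cell `u` is stable for `c` under `F` if it is inactive and remains
inactive at all times. -/
def isStable (F : (ℤ × ℤ → Bool) → (ℤ × ℤ → Bool)) (c : ℤ × ℤ → Bool)
    (u : ℤ × ℤ) : Prop :=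
  c u = false ∧ ∀ t : ℕ, F^[t] c u = false

/-- A configuration is periodic of period `n` in both coordinate directions. -/
def Periodic (n : ℕ) (c : ℤ × ℤ → Bool) : Prop :=
  ∀ p : ℤ × ℤ, c (p.1 + n, p.2) = c p ∧ c (p.1, p.2 + n) = c p

/-- The graph `G[0]` on the inactive cells of `c`, with adjacency inherited
from the triangular grid. -/
def triG0 (c : ℤ × ℤ → Bool) : SimpleGraph (ℤ × ℤ) where
  Adj p q := p ≠ q ∧ c p = false ∧ c q = false ∧ (q ∈ triNbrs p ∨ p ∈ triNbrs q)
  symm := ⟨fun p q h => ⟨h.1.symm, h.2.2.1, h.2.1, h.2.2.2.symm⟩⟩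
  loopless := ⟨fun p h => h.1 rfl⟩

/-! ### Auxiliary lemmas -/

lemma triNbrs_symm {p q : ℤ × ℤ} (h : q ∈ triNbrs p) : p ∈ triNbrs q := by
  obtain ⟨i, j⟩ := p; obtain ⟨a, b⟩ := q
  simp only [triNbrs, Finset.mem_insert, Finset.mem_singleton, Prod.mk.injEq,
    Int.even_iff] at h ⊢
  rcases h with ⟨h1, h2⟩ | ⟨h1, h2⟩ | ⟨h1, h2⟩ <;> subst h1 <;> subst h2 <;>
    split_ifs <;> omega

lemma triG0_adj_nbr {c : ℤ × ℤ → Bool} {x y : ℤ × ℤ} (h : (triG0 c).Adj x y) :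
    y ∈ triNbrs x := by
  rcases h.2.2.2 with h' | h'
  · exact h'
  · exact triNbrs_symm h'

lemma triNbrs_card (p : ℤ × ℤ) : (triNbrs p).card = 3 := by
  obtain ⟨i, j⟩ := p
  rw [triNbrs, Finset.card_insert_of_notMem, Finset.card_insert_of_notMem,
    Finset.card_singleton]
  · simp only [Finset.mem_singleton, Prod.mk.injEq, not_and]
    intro h; omega
  · simp only [Finset.mem_insert, Finset.mem_singleton, Prod.mk.injEq, not_or, not_and]
    constructor <;> intro h <;> omega

lemma triCount_le_one {c : ℤ × ℤ → Bool} {p q1 q2 : ℤ × ℤ}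
    (h1 : q1 ∈ triNbrs p) (h2 : q2 ∈ triNbrs p) (hne : q1 ≠ q2)
    (hc1 : c q1 = false) (hc2 : c q2 = false) : triActCount c p ≤ 1 := by
  have hpart := Finset.card_filter_add_card_filter_not
    (s := triNbrs p) (p := fun q => c q = true)
  have hsub : ({q1, q2} : Finset (ℤ × ℤ)) ⊆
      (triNbrs p).filter (fun q => ¬ (c q = true)) := by
    intro x hx
    rcases Finset.mem_insert.1 hx with rfl | hx
    · exact Finset.mem_filter.2 ⟨h1, by simp [hc1]⟩
    · rcases Finset.mem_singleton.1 hx with rfl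
      exact Finset.mem_filter.2 ⟨h2, by simp [hc2]⟩
  have h2le : 2 ≤ ((triNbrs p).filter (fun q => ¬ (c q = true))).card := by
    have := Finset.card_le_card hsub
    rwa [Finset.card_insert_of_notMem (by simpa using hne), Finset.card_singleton] at this
  rw [triNbrs_card] at hpart
  unfold triActCount
  omega

lemma ruleT_false_of_le_one {I : Finset ℕ} (hI : ∀ m ∈ I, 2 ≤ m) {c : ℤ × ℤ → Bool}
    {p : ℤ × ℤ} (hp : c p = false) (h1 : triActCount c p ≤ 1) : ruleT I c p = false := by
  simp only [ruleT, hp, Bool.false_or, decide_eq_false_iff_not]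
  intro hm
  exact absurd (hI _ hm) (by omega)

lemma ruleT_true {I : Finset ℕ} {c : ℤ × ℤ → Bool} {p : ℤ × ℤ} (h : c p = true) :
    ruleT I c p = true := by simp [ruleT, h]

lemma ruleT_iter_false {I : Finset ℕ} {c : ℤ × ℤ → Bool} {p : ℤ × ℤ} {t : ℕ}
    (h : (ruleT I)^[t] c p = false) : c p = false := by
  induction t with
  | zero => exact h
  | succ t ih =>
    rw [Function.iterate_succ_apply'] at h
    simp only [ruleT, Bool.or_eq_false_iff] at h
    exact ih h.1

lemma card_filter_triple {α : Type*} [DecidableEq α] (P : α → Prop) [DecidablePred P]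
    (a b e : α) (hab : a ≠ b) (hae : a ≠ e) (hbe : b ≠ e) :
    (({a, b, e} : Finset α).filter P).card
      = (if P a then 1 else 0) + (if P b then 1 else 0) + (if P e then 1 else 0) := by
  rw [Finset.filter_insert, Finset.filter_insert, Finset.filter_singleton]
  split_ifs <;>
    simp [Finset.card_insert_of_notMem, Finset.mem_filter, hab, hae, hbe, *]

lemma triActCount_eq (c : ℤ × ℤ → Bool) (p : ℤ × ℤ) :
    triActCount c p = (if c (p.1 - 1, p.2) = true then 1 else 0)
      + (if c (p.1 + 1, p.2) = true then 1 else 0)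
      + (if c (p.1, if Even (p.1 + p.2) then p.2 - 1 else p.2 + 1) = true then 1 else 0) := by
  rw [triActCount, triNbrs, card_filter_triple] <;>
    · intro h; rw [Prod.mk.injEq] at h; omega

lemma triActCount_shift {n : ℕ} (hne : Even n) {c : ℤ × ℤ → Bool} (hper : Periodic n c)
    (p : ℤ × ℤ) : triActCount c (p.1 + n, p.2) = triActCount c p
      ∧ triActCount c (p.1, p.2 + n) = triActCount c p := by
  obtain ⟨i, j⟩ := p
  have hn2 : (n : ℤ) % 2 = 0 := by
    obtain ⟨k, hk⟩ := hne; omega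
  constructor
  · rw [triActCount_eq, triActCount_eq]
    have e1 : (i + (n : ℤ) - 1, j) = (i - 1 + n, j) := by rw [Prod.mk.injEq]; omega
    have e2 : (i + (n : ℤ) + 1, j) = (i + 1 + n, j) := by rw [Prod.mk.injEq]; omega
    have epar : Even (i + (n : ℤ) + j) ↔ Even (i + j) := by
      rw [Int.even_iff, Int.even_iff]; omega
    simp only [e1, e2, epar, hper (i - 1, j) |>.1, hper (i + 1, j) |>.1]
    by_cases hp : Even (i + j)
    · simp only [hp, if_true, (hper (i, j - 1)).1]
    · simp only [hp, if_false, (hper (i, j + 1)).1]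
  · rw [triActCount_eq, triActCount_eq]
    have epar : Even (i + (j + (n : ℤ))) ↔ Even (i + j) := by
      rw [Int.even_iff, Int.even_iff]; omega
    simp only [epar, (hper (i - 1, j)).2, (hper (i + 1, j)).2]
    by_cases hp : Even (i + j)
    · have e3 : (i, j + (n : ℤ) - 1) = (i, j - 1 + n) := by rw [Prod.mk.injEq]; omega
      simp only [hp, if_true, e3, (hper (i, j - 1)).2]
    · have e3 : (i, j + (n : ℤ) + 1) = (i, j + 1 + n) := by rw [Prod.mk.injEq]; omega
      simp only [hp, if_false, e3, (hper (i, j + 1)).2]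

lemma Periodic.ruleT_per {n : ℕ} (hne : Even n) {c : ℤ × ℤ → Bool}
    (hper : Periodic n c) (I : Finset ℕ) : Periodic n (ruleT I c) := by
  intro p
  have hs := triActCount_shift hne hper p
  constructor
  · show ruleT I c (p.1 + n, p.2) = ruleT I c p
    simp only [ruleT, hs.1]
    rw [(hper p).1]
  · show ruleT I c (p.1, p.2 + n) = ruleT I c p
    simp only [ruleT, hs.2]
    rw [(hper p).2]

lemma Periodic.iter {n : ℕ} (hne : Even n) {c : ℤ × ℤ → Bool}
    (hper : Periodic n c) (I : Finset ℕ) (t : ℕ) : Periodic n ((ruleT I)^[t] c) := by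
  induction t with
  | zero => exact hper
  | succ t ih =>
    rw [Function.iterate_succ_apply']
    exact ih.ruleT_per hne I

lemma Periodic.shift_mul {n : ℕ} {c : ℤ × ℤ → Bool} (hper : Periodic n c) (p : ℤ × ℤ) :
    (∀ k : ℤ, c (p.1 + k * n, p.2) = c p) ∧ (∀ k : ℤ, c (p.1, p.2 + k * n) = c p) := by
  obtain ⟨i, j⟩ := p
  constructor
  · intro k
    induction k using Int.induction_on with
    | zero => simp
    | succ m ih =>
      have : ((i : ℤ) + (m + 1) * n, j) = ((i + m * n : ℤ) + n, j) := by
        rw [Prod.mk.injEq]; constructor <;> ring_nf <;> omega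
      rw [this, (hper (i + m * n, j)).1, ih]
    | pred m ih =>
      have : ((i : ℤ) + (-m - 1) * n, (j : ℤ)) + ((n : ℤ), 0) = (i + -m * n, j) := by
        rw [Prod.ext_iff]; constructor <;> simp <;> ring
      have h2 := (hper (i + (-m - 1) * n, j)).1
      simp only [] at h2
      rw [← ih]
      rw [show (i + -(m : ℤ) * n) = (i + (-m - 1) * n) + n by ring] at ih ⊢
      rw [h2]
  · intro k
    induction k using Int.induction_on with
    | zero => simp
    | succ m ih =>
      have : ((i : ℤ), (j : ℤ) + (m + 1) * n) = (i, (j + m * n : ℤ) + n) := by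
        rw [Prod.mk.injEq]; constructor <;> ring_nf <;> omega
      rw [this, (hper (i, j + m * n)).2, ih]
    | pred m ih =>
      have h2 := (hper (i, j + (-m - 1) * n)).2
      rw [← ih]
      rw [show (j + -(m : ℤ) * n) = (j + (-m - 1) * n) + n by ring] at ih ⊢
      rw [h2]

lemma Periodic.rep {n : ℕ} (hn : 0 < n) {c : ℤ × ℤ → Bool} (hper : Periodic n c)
    (p : ℤ × ℤ) : c p = c (p.1 % n, p.2 % n) := by
  obtain ⟨i, j⟩ := p
  have h1 := (hper.shift_mul (i % n, j)).1 (i / n)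
  have h2 := (hper.shift_mul (i % n, j % n)).2 (j / n)
  simp only at h1 h2
  rw [show i % n + i / n * (n : ℤ) = i by rw [mul_comm]; exact Int.emod_add_mul_ediv i n] at h1
  rw [show j % n + j / n * (n : ℤ) = j by rw [mul_comm]; exact Int.emod_add_mul_ediv j n] at h2
  simp only []
  rw [← h2, ← h1]

lemma exists_fixed {n : ℕ} (hn : 0 < n) (hne : Even n) {c : ℤ × ℤ → Bool}
    (hper : Periodic n c) (I : Finset ℕ) :
    ∃ t0 : ℕ, ruleT I ((ruleT I)^[t0] c) = (ruleT I)^[t0] c := by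
  classical
  set dom : Finset (ℤ × ℤ) :=
    (Finset.range n ×ˢ Finset.range n).image (fun q => ((q.1 : ℤ), (q.2 : ℤ))) with hdom
  set m : ℕ → ℕ := fun t => ((dom.filter (fun p => (ruleT I)^[t] c p = true)).card) with hm
  have hsub : ∀ t, dom.filter (fun p => (ruleT I)^[t] c p = true)
      ⊆ dom.filter (fun p => (ruleT I)^[t + 1] c p = true) := by
    intro t x hx
    rw [Finset.mem_filter] at hx ⊢
    refine ⟨hx.1, ?_⟩
    rw [Function.iterate_succ_apply']
    exact ruleT_true hx.2
  have hbound : ∀ t, m t ≤ dom.card := fun t => Finset.card_le_card (Finset.filter_subset _ _)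
  have hexists : ∃ t, m t = m (t + 1) := by
    by_contra hcon
    push_neg at hcon
    have hsm : StrictMono m := by
      apply strictMono_nat_of_lt_succ
      intro t
      exact lt_of_le_of_ne (Finset.card_le_card (hsub t)) (hcon t)
    have := hsm.le_apply (x := dom.card + 1)
    have := hbound (dom.card + 1)
    omega
  obtain ⟨t, ht⟩ := hexists
  refine ⟨t, ?_⟩
  have hfeq : dom.filter (fun p => (ruleT I)^[t] c p = true)
      = dom.filter (fun p => (ruleT I)^[t + 1] c p = true) :=
    Finset.eq_of_subset_of_card_le (hsub t) (le_of_eq ht.symm)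
  have hdomeq : ∀ p ∈ dom, (ruleT I)^[t] c p = (ruleT I)^[t + 1] c p := by
    intro p hp
    cases h1 : (ruleT I)^[t] c p with
    | true =>
      have : p ∈ dom.filter (fun p => (ruleT I)^[t + 1] c p = true) := by
        rw [← hfeq, Finset.mem_filter]; exact ⟨hp, h1⟩
      exact ((Finset.mem_filter.1 this).2).symm
    | false =>
      cases h2 : (ruleT I)^[t + 1] c p with
      | false => rfl
      | true =>
        have : p ∈ dom.filter (fun p => (ruleT I)^[t] c p = true) := by
          rw [hfeq, Finset.mem_filter]; exact ⟨hp, h2⟩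
        rw [(Finset.mem_filter.1 this).2] at h1
        exact h1.symm
  have hall : ∀ p : ℤ × ℤ, (ruleT I)^[t] c p = (ruleT I)^[t + 1] c p := by
    intro p
    have hmem : ((p.1 % n : ℤ), (p.2 % n : ℤ)) ∈ dom := by
      have hnz : (n : ℤ) ≠ 0 := by exact_mod_cast hn.ne'
      have hpos : (0 : ℤ) < n := by exact_mod_cast hn
      have h1a := Int.emod_nonneg p.1 hnz
      have h1b := Int.emod_lt_of_pos p.1 hpos
      have h2a := Int.emod_nonneg p.2 hnz
      have h2b := Int.emod_lt_of_pos p.2 hpos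
      rw [hdom, Finset.mem_image]
      refine ⟨((p.1 % n).toNat, (p.2 % n).toNat), ?_, ?_⟩
      · rw [Finset.mem_product, Finset.mem_range, Finset.mem_range]
        omega
      · rw [Prod.mk.injEq]
        constructor <;> simp <;> omega
    have e1 := (hper.iter hne I t).rep hn p
    have e2 := (hper.iter hne I (t + 1)).rep hn p
    rw [e1, e2]
    exact hdomeq _ hmem
  have hfun : (ruleT I)^[t + 1] c = (ruleT I)^[t] c := funext fun p => (hall p).symm
  rw [Function.iterate_succ_apply'] at hfun
  exact hfun

lemma fixed_two_nbrs {d : ℤ × ℤ → Bool} (hfix : ruleT {2} d = d) {p : ℤ × ℤ}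
    (hp : d p = false) {q : ℤ × ℤ} (hq : q ∈ triNbrs p) (hdq : d q = false) :
    ∃ q1 q2, q1 ≠ q2 ∧ q1 ∈ triNbrs p ∧ q2 ∈ triNbrs p ∧ d q1 = false ∧ d q2 = false := by
  classical
  have hne2 : triActCount d p ≠ 2 := by
    intro h2
    have := congrFun hfix p
    rw [hp] at this
    simp [ruleT, h2, hp] at this
  have hpart := Finset.card_filter_add_card_filter_not
    (s := triNbrs p) (p := fun q => d q = true)
  rw [triNbrs_card] at hpart
  have hq1 : q ∈ (triNbrs p).filter (fun q => ¬ (d q = true)) :=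
    Finset.mem_filter.2 ⟨hq, by simp [hdq]⟩
  have hpos : 1 ≤ ((triNbrs p).filter (fun q => ¬ (d q = true))).card :=
    Finset.card_pos.2 ⟨q, hq1⟩
  have hcount : triActCount d p ≤ 1 := by
    unfold triActCount
    rcases Nat.lt_or_ge (((triNbrs p).filter (fun q => d q = true)).card) 2 with h | h
    · omega
    · exfalso; apply hne2; unfold triActCount; omega
  have h2le : 2 ≤ ((triNbrs p).filter (fun q => ¬ (d q = true))).card := by
    unfold triActCount at hcount; omega
  obtain ⟨a, ha, b, hb, hab⟩ := Finset.one_lt_card.1 h2le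
  rw [Finset.mem_filter] at ha hb
  exact ⟨a, b, hab, ha.1, hb.1, by simpa using ha.2, by simpa using hb.2⟩

lemma T_stable {c d : ℤ × ℤ → Bool} (hfix : ruleT {2} d = d)
    (hdc : ∀ p, d p = false → c p = false) :
    ∀ t : ℕ, ∀ p : ℤ × ℤ, d p = false → (∃ q ∈ triNbrs p, d q = false) →
      (ruleT {2, 3})^[t] c p = false := by
  intro t
  induction t with
  | zero => exact fun p hp _ => hdc p hp
  | succ t ih =>
    intro p hp hq
    obtain ⟨q, hq, hdq⟩ := hq
    obtain ⟨q1, q2, hne, hq1, hq2, hd1, hd2⟩ := fixed_two_nbrs hfix hp hq hdq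
    rw [Function.iterate_succ_apply']
    apply ruleT_false_of_le_one
    · intro m hm
      simp only [Finset.mem_insert, Finset.mem_singleton] at hm
      omega
    · exact ih p hp ⟨q, hq, hdq⟩
    · apply triCount_le_one hq1 hq2 hne
      · exact ih q1 hd1 ⟨p, triNbrs_symm hq1, hp⟩
      · exact ih q2 hd2 ⟨p, triNbrs_symm hq2, hp⟩

open SimpleGraph in
lemma walk_support_false {c : ℤ × ℤ → Bool} {a b : ℤ × ℤ} (q : (triG0 c).Walk a b)
    (hb : c b = false) : ∀ x ∈ q.support, c x = false := by
  induction q with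
  | nil =>
    intro x hx
    rw [SimpleGraph.Walk.support_nil, List.mem_singleton] at hx
    rwa [hx]
  | cons h q ih =>
    intro x hx
    rw [SimpleGraph.Walk.support_cons, List.mem_cons] at hx
    rcases hx with rfl | hx
    · exact h.2.1
    · exact ih hb x hx

open SimpleGraph in
lemma path_internal {V : Type*} {G : SimpleGraph V} {a b : V} (q : G.Walk a b)
    (hq : q.support.Nodup) : ∀ x ∈ q.support, x ≠ a → x ≠ b →
    ∃ y1 y2, y1 ≠ y2 ∧ G.Adj x y1 ∧ G.Adj x y2 ∧ y1 ∈ q.support ∧ y2 ∈ q.support := by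
  induction q with
  | nil =>
    intro x hx hxa _
    rw [SimpleGraph.Walk.support_nil, List.mem_singleton] at hx
    exact absurd hx hxa
  | @cons a v b h q ih =>
    intro x hx hxa hxb
    rw [SimpleGraph.Walk.support_cons, List.mem_cons] at hx
    rcases hx with rfl | hx
    · exact absurd rfl hxa
    rw [SimpleGraph.Walk.support_cons, List.nodup_cons] at hq
    by_cases hxv : x = v
    · subst hxv
      cases q with
      | nil => exact absurd rfl hxb
      | @cons _ z _ h' q' =>
        refine ⟨a, z, ?_, h.symm, h', ?_, ?_⟩
        · intro haz
          apply hq.1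
          rw [haz]
          rw [SimpleGraph.Walk.support_cons, List.mem_cons]
          right
          exact SimpleGraph.Walk.start_mem_support q'
        · rw [SimpleGraph.Walk.support_cons, List.mem_cons]; left; rfl
        · rw [SimpleGraph.Walk.support_cons, List.mem_cons]
          right
          rw [SimpleGraph.Walk.support_cons, List.mem_cons]
          right
          exact SimpleGraph.Walk.start_mem_support q'
    · obtain ⟨y1, y2, hne, h1, h2, m1, m2⟩ := ih hq.2 x hx hxv hxb
      refine ⟨y1, y2, hne, h1, h2, ?_, ?_⟩
      · rw [SimpleGraph.Walk.support_cons, List.mem_cons]; right; exact m1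
      · rw [SimpleGraph.Walk.support_cons, List.mem_cons]; right; exact m2

open SimpleGraph in
lemma path_penult {V : Type*} {G : SimpleGraph V} {a b : V} (q : G.Walk a b)
    (hq : q.support.Nodup) (hlen : 1 ≤ q.length) :
    ∃ z, G.Adj z b ∧ z ∈ q.support ∧ (2 ≤ q.length → z ≠ a) := by
  induction q with
  | nil => simp at hlen
  | @cons a v b h q ih =>
    rw [SimpleGraph.Walk.support_cons, List.nodup_cons] at hq
    cases q with
    | nil =>
      refine ⟨a, h, ?_, ?_⟩
      · rw [SimpleGraph.Walk.support_cons, List.mem_cons]; left; rfl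
      · intro h2
        rw [SimpleGraph.Walk.length_cons, SimpleGraph.Walk.length_nil] at h2
        omega
    | @cons _ z _ h' q' =>
      obtain ⟨w, hw, hwm, _⟩ := ih hq.2 (by rw [SimpleGraph.Walk.length_cons]; omega)
      refine ⟨w, hw, ?_, fun _ => ?_⟩
      · rw [SimpleGraph.Walk.support_cons, List.mem_cons]; right; exact hwm
      · intro hwa
        apply hq.1
        rw [← hwa]
        exact hwm

open SimpleGraph in
lemma cycle_two {V : Type*} [DecidableEq V] {G : SimpleGraph V} {w : V} {cy : G.Walk w w}
    (hc : cy.IsCycle) {x : V} (hx : x ∈ cy.support) :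
    ∃ y1 y2, y1 ≠ y2 ∧ G.Adj x y1 ∧ G.Adj x y2 ∧ y1 ∈ cy.support ∧ y2 ∈ cy.support := by
  have hq := hc.rotate hx
  have hmem : ∀ y, y ∈ (cy.rotate x hx).support.tail → y ∈ cy.support := fun y hy =>
    List.mem_of_mem_tail ((SimpleGraph.Walk.support_rotate cy x hx).mem_iff.1 hy)
  set q := cy.rotate x hx with hqdef
  clear_value q
  cases q with
  | nil => exact absurd hq (SimpleGraph.Walk.IsCycle.not_of_nil)
  | @cons _ y _ h r =>
    have hrn : r.support.Nodup := by
      have := hq.support_nodup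
      rwa [SimpleGraph.Walk.support_cons, List.tail_cons] at this
    have hrlen : 2 ≤ r.length := by
      have := hq.three_le_length
      rw [SimpleGraph.Walk.length_cons] at this
      omega
    obtain ⟨z, hz, hzm, hzne⟩ := path_penult r hrn (by omega)
    refine ⟨y, z, fun hyz => (hzne hrlen) hyz.symm, h, hz.symm, ?_, ?_⟩
    · apply hmem
      rw [SimpleGraph.Walk.support_cons, List.tail_cons]
      exact SimpleGraph.Walk.start_mem_support r
    · apply hmem
      rw [SimpleGraph.Walk.support_cons, List.tail_cons]
      exact hzm

open SimpleGraph in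
lemma walk_head_nbr {V : Type*} {G : SimpleGraph V} {a b : V} (q : G.Walk a b)
    (hab : a ≠ b) : ∃ y, G.Adj a y ∧ y ∈ q.support := by
  cases q with
  | nil => exact absurd rfl hab
  | cons h r =>
    exact ⟨_, h, by
      rw [SimpleGraph.Walk.support_cons, List.mem_cons]
      right
      exact r.start_mem_support⟩

/-- triangular grid, `c` periodic of even period `n`. If `u` is
stable under rule 2 but not under rule 23, then the connected component
`G[0,u]` of inactive cells containing `u` is a tree: it is connected and
contains no cycle. -/
theorem stmt6 (n : ℕ) (hn : 0 < n) (hne : Even n) (c : ℤ × ℤ → Bool)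
    (hper : Periodic n c) (u : ℤ × ℤ)
    (hstab2 : isStable (ruleT {2}) c u)
    (hnstab23 : ¬ isStable (ruleT {2, 3}) c u) :
    (∀ w w', (triG0 c).Reachable u w → (triG0 c).Reachable u w' →
      (triG0 c).Reachable w w') ∧
    (∀ w, (triG0 c).Reachable u w → ∀ p : (triG0 c).Walk w w, ¬ p.IsCycle) := by
  classical
  constructor
  · exact fun w w' h1 h2 => h1.symm.trans h2
  · intro w hw cy hcyc
    obtain ⟨P0⟩ := hw
    have hP : P0.bypass.IsPath := P0.bypass_isPath
    set P := P0.bypass with hPdef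
    clear_value P
    -- the endpoint of the cycle is inactive
    have hcw : c w = false := by
      cases cy with
      | nil => exact (SimpleGraph.Walk.IsCycle.not_of_nil hcyc).elim
      | cons h q => exact h.2.1
    -- all cells of the path and cycle are inactive
    have hS0 : ∀ x, (x ∈ P.support ∨ x ∈ cy.support) → c x = false := by
      intro x hx
      rcases hx with hx | hx
      · exact walk_support_false P hcw x hx
      · exact walk_support_false cy hcw x hx
    -- the path and cycle stay inactive forever under rule 2
    have hSinv : ∀ t : ℕ, ∀ x, (x ∈ P.support ∨ x ∈ cy.support) →
        (ruleT {2})^[t] c x = false := by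
      intro t
      induction t with
      | zero => exact hS0
      | succ t ih =>
        intro x hx
        by_cases hxu : x = u
        · subst hxu
          exact hstab2.2 (t + 1)
        have key : ∃ y1 y2, y1 ≠ y2 ∧ (triG0 c).Adj x y1 ∧ (triG0 c).Adj x y2 ∧
            (y1 ∈ P.support ∨ y1 ∈ cy.support) ∧ (y2 ∈ P.support ∨ y2 ∈ cy.support) := by
          have hfromCy : x ∈ cy.support → ∃ y1 y2, y1 ≠ y2 ∧ (triG0 c).Adj x y1 ∧
              (triG0 c).Adj x y2 ∧ (y1 ∈ P.support ∨ y1 ∈ cy.support) ∧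
              (y2 ∈ P.support ∨ y2 ∈ cy.support) := by
            intro hxC
            obtain ⟨y1, y2, hne12, h1, h2, m1, m2⟩ := cycle_two hcyc hxC
            exact ⟨y1, y2, hne12, h1, h2, Or.inr m1, Or.inr m2⟩
          rcases hx with hxP | hxC
          · by_cases hxw : x = w
            · subst hxw
              exact hfromCy cy.start_mem_support
            · obtain ⟨y1, y2, hne12, h1, h2, m1, m2⟩ :=
                path_internal P hP.support_nodup x hxP hxu hxw
              exact ⟨y1, y2, hne12, h1, h2, Or.inl m1, Or.inl m2⟩
          · exact hfromCy hxC
        obtain ⟨y1, y2, hne12, h1, h2, m1, m2⟩ := key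
        rw [Function.iterate_succ_apply']
        apply ruleT_false_of_le_one
        · intro m hm
          simp only [Finset.mem_singleton] at hm
          omega
        · exact ih x hx
        · exact triCount_le_one (triG0_adj_nbr h1) (triG0_adj_nbr h2) hne12
            (ih y1 m1) (ih y2 m2)
    -- take the fixed point of the rule-2 dynamics
    obtain ⟨t0, hfix⟩ := exists_fixed hn hne hper {2}
    set d := (ruleT {2})^[t0] c with hd
    have hdc : ∀ p, d p = false → c p = false := fun p hp => ruleT_iter_false hp
    have hSd : ∀ x, (x ∈ P.support ∨ x ∈ cy.support) → d x = false :=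
      fun x hx => hSinv t0 x hx
    have hdu : d u = false := hstab2.2 t0
    have hnbr : ∃ q ∈ triNbrs u, d q = false := by
      by_cases huw : u = w
      · subst huw
        obtain ⟨y1, _, _, h1, _, m1, _⟩ := cycle_two hcyc cy.start_mem_support
        exact ⟨y1, triG0_adj_nbr h1, hSd y1 (Or.inr m1)⟩
      · obtain ⟨y, hy, hym⟩ := walk_head_nbr P huw
        exact ⟨y, triG0_adj_nbr hy, hSd y (Or.inl hym)⟩
    exact hnstab23 ⟨hstab2.1, fun t => T_stable hfix hdc t u hdu hnbr⟩
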